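/- Let z^{α₁},…,z^{α_N} be all squarefree (multiaffine) monomials of degree n in z₁,…,z_d with 1 ≤ n ≤ d−1. For every squarefree monomial z^β of degree n+1 there exist real symmetric N×N matrices C₁,…,C_d, each of rank at most 2, such that (z₁C₁+⋯+z_dC_d)·(z^{α₁},…,z^{α_N})ᵀ = (z^β,0,…,0)ᵀ as an identity of polynomial vectors. -/

import Mathlib

open MvPolynomial

namespace MultiAffineAux

variable {d k n : ℕ}

/-- Bundle of hypotheses on the data `E, p, q`. -/
structure Good (E : Finset (Fin d)) (p : Fin k → Fin d) (q : Fin (k + 1) → Fin d) : Prop where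
  hp : Function.Injective p
  hq : Function.Injective q
  hpq : ∀ i j, p i ≠ q j
  hpE : ∀ i, p i ∉ E
  hqE : ∀ j, q j ∉ E

/-- Even-indexed vertices of the cycle. -/
def Av (E : Finset (Fin d)) (p : Fin k → Fin d) (q : Fin (k + 1) → Fin d) (i : ℕ) :
    Finset (Fin d) :=
  E ∪ (Finset.univ.filter fun t : Fin k => i ≤ t.val).image p ∪
    (Finset.univ.filter fun t : Fin (k + 1) => t.val < i).image q

/-- Odd-indexed vertices of the cycle. -/
def Bv (E : Finset (Fin d)) (p : Fin k → Fin d) (q : Fin (k + 1) → Fin d) (i : ℕ) :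
    Finset (Fin d) :=
  E ∪ (Finset.univ.filter fun t : Fin k => t.val < i).image p ∪
    (Finset.univ.filter fun t : Fin (k + 1) => i < t.val).image q

section SetLemmas

variable (E : Finset (Fin d)) (p : Fin k → Fin d) (q : Fin (k + 1) → Fin d)

lemma filter_ge_insert (i : Fin k) :
    (Finset.univ.filter fun t : Fin k => i.val ≤ t.val) =
      insert i (Finset.univ.filter fun t : Fin k => i.val + 1 ≤ t.val) := by
  ext t; simp [Fin.ext_iff]; omega

lemma filter_lt_succ_insert (i : Fin k) :
    (Finset.univ.filter fun t : Fin (k + 1) => t.val < i.val + 1) =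
      insert i.castSucc (Finset.univ.filter fun t : Fin (k + 1) => t.val < i.val) := by
  ext t; simp [Fin.ext_iff]; omega

lemma filter_gt_insert (i : Fin k) :
    (Finset.univ.filter fun t : Fin (k + 1) => i.val < t.val) =
      insert i.succ (Finset.univ.filter fun t : Fin (k + 1) => i.val + 1 < t.val) := by
  ext t; simp [Fin.ext_iff]; omega

lemma filter_ltp_succ_insert (i : Fin k) :
    (Finset.univ.filter fun t : Fin k => t.val < i.val + 1) =
      insert i (Finset.univ.filter fun t : Fin k => t.val < i.val) := by
  ext t; simp [Fin.ext_iff]; omega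

lemma Av_step (i : Fin k) :
    insert (q i.castSucc) (Av E p q i.val) = insert (p i) (Av E p q (i.val + 1)) := by
  have h1 : Av E p q i.val =
      insert (p i) (E ∪ (Finset.univ.filter fun t : Fin k => i.val + 1 ≤ t.val).image p ∪
        (Finset.univ.filter fun t : Fin (k + 1) => t.val < i.val).image q) := by
    rw [Av, filter_ge_insert, Finset.image_insert, Finset.union_insert, Finset.insert_union]
  have h2 : Av E p q (i.val + 1) =
      insert (q i.castSucc) (E ∪ (Finset.univ.filter fun t : Fin k => i.val + 1 ≤ t.val).image p ∪
        (Finset.univ.filter fun t : Fin (k + 1) => t.val < i.val).image q) := by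
    rw [Av, filter_lt_succ_insert, Finset.image_insert, Finset.union_insert]
  rw [h1, h2, Finset.insert_comm]

lemma Bv_step (i : Fin k) :
    insert (p i) (Bv E p q i.val) = insert (q i.succ) (Bv E p q (i.val + 1)) := by
  have h1 : Bv E p q i.val =
      insert (q i.succ) (E ∪ (Finset.univ.filter fun t : Fin k => t.val < i.val).image p ∪
        (Finset.univ.filter fun t : Fin (k + 1) => i.val + 1 < t.val).image q) := by
    rw [Bv, filter_gt_insert, Finset.image_insert, Finset.union_insert]
  have h2 : Bv E p q (i.val + 1) =
      insert (p i) (E ∪ (Finset.univ.filter fun t : Fin k => t.val < i.val).image p ∪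
        (Finset.univ.filter fun t : Fin (k + 1) => i.val + 1 < t.val).image q) := by
    rw [Bv, filter_ltp_succ_insert, Finset.image_insert, Finset.union_insert,
      Finset.insert_union]
  rw [h1, h2, Finset.insert_comm]

lemma Bv_zero_insert : insert (q 0) (Bv E p q 0) = E ∪ Finset.univ.image q := by
  have h0 : (Finset.univ.filter fun t : Fin k => t.val < 0) = ∅ := by
    ext t; simp
  have h1 : insert (0 : Fin (k + 1)) (Finset.univ.filter fun t : Fin (k + 1) => 0 < t.val) =
      Finset.univ := by
    ext t; simp only [Finset.mem_insert, Finset.mem_filter, Finset.mem_univ, true_and, iff_true, Fin.ext_iff, Fin.val_zero]; omega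
  rw [Bv, h0, Finset.image_empty, Finset.union_empty, ← Finset.union_insert,
    ← Finset.image_insert, h1]

lemma Av_last_insert :
    insert (q (Fin.last k)) (Av E p q k) = E ∪ Finset.univ.image q := by
  have h0 : (Finset.univ.filter fun t : Fin k => k ≤ t.val) = ∅ := by
    ext t; simp only [Finset.mem_filter, Finset.mem_univ, true_and, Finset.notMem_empty, iff_false, not_le]; exact t.isLt

  have h1 : insert (Fin.last k) (Finset.univ.filter fun t : Fin (k + 1) => t.val < k) =
      Finset.univ := by
    ext t; simp [Fin.ext_iff, Fin.last]; omega
  rw [Av, h0, Finset.image_empty, Finset.union_empty, ← Finset.union_insert,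
    ← Finset.image_insert, h1]

lemma Bv_last_eq_Av_zero : Bv E p q k = Av E p q 0 := by
  have h0 : (Finset.univ.filter fun t : Fin k => t.val < k) = Finset.univ := by
    ext t; simp [t.isLt]
  have h1 : (Finset.univ.filter fun t : Fin (k + 1) => k < t.val) = ∅ := by
    ext t; simp; omega
  have h2 : (Finset.univ.filter fun t : Fin k => 0 ≤ t.val) = Finset.univ := by
    ext t; simp
  have h3 : (Finset.univ.filter fun t : Fin (k + 1) => t.val < 0) = ∅ := by
    ext t; simp
  rw [Bv, Av, h0, h1, h2, h3]

lemma Av_zero_eq : Av E p q 0 = E ∪ Finset.univ.image p := by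
  have h2 : (Finset.univ.filter fun t : Fin k => 0 ≤ t.val) = Finset.univ := by
    ext t; simp
  have h3 : (Finset.univ.filter fun t : Fin (k + 1) => t.val < 0) = ∅ := by
    ext t; simp
  rw [Av, h2, h3, Finset.image_empty, Finset.union_empty]

end SetLemmas

section MemLemmas

variable {E : Finset (Fin d)} {p : Fin k → Fin d} {q : Fin (k + 1) → Fin d}

lemma q_not_mem_Av (G : Good E p q) {j : Fin (k + 1)} {m : ℕ} (h : m ≤ j.val) :
    q j ∉ Av E p q m := by
  simp only [Av, Finset.mem_union, Finset.mem_image, Finset.mem_filter, Finset.mem_univ,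
    true_and]
  rintro ((hE | ⟨t, _, hpt⟩) | ⟨t, ht, hqt⟩)
  · exact G.hqE j hE
  · exact G.hpq t j hpt
  · have := G.hq hqt; subst this; omega

lemma p_not_mem_Av (G : Good E p q) {i : Fin k} {m : ℕ} (h : i.val < m) :
    p i ∉ Av E p q m := by
  simp only [Av, Finset.mem_union, Finset.mem_image, Finset.mem_filter, Finset.mem_univ,
    true_and]
  rintro ((hE | ⟨t, ht, hpt⟩) | ⟨t, _, hqt⟩)
  · exact G.hpE i hE
  · have := G.hp hpt; subst this; omega
  · exact G.hpq i t hqt.symm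

lemma p_not_mem_Bv (G : Good E p q) {i : Fin k} {m : ℕ} (h : m ≤ i.val) :
    p i ∉ Bv E p q m := by
  simp only [Bv, Finset.mem_union, Finset.mem_image, Finset.mem_filter, Finset.mem_univ,
    true_and]
  rintro ((hE | ⟨t, ht, hpt⟩) | ⟨t, _, hqt⟩)
  · exact G.hpE i hE
  · have := G.hp hpt; subst this; omega
  · exact G.hpq i t hqt.symm

lemma q_not_mem_Bv (G : Good E p q) {j : Fin (k + 1)} {m : ℕ} (h : j.val ≤ m) :
    q j ∉ Bv E p q m := by
  simp only [Bv, Finset.mem_union, Finset.mem_image, Finset.mem_filter, Finset.mem_univ,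
    true_and]
  rintro ((hE | ⟨t, _, hpt⟩) | ⟨t, ht, hqt⟩)
  · exact G.hqE j hE
  · exact G.hpq t j hpt
  · have := G.hq hqt; subst this; omega

end MemLemmas

section CardLemmas

lemma card_filter_lt_fin (N m : ℕ) (h : m ≤ N) :
    ((Finset.univ : Finset (Fin N)).filter fun t => t.val < m).card = m := by
  induction m with
  | zero => simp
  | succ m ih =>
    have hm : m ≤ N := Nat.le_of_succ_le h
    have hins : ((Finset.univ : Finset (Fin N)).filter fun t => t.val < m + 1) =
        insert ⟨m, h⟩ ((Finset.univ : Finset (Fin N)).filter fun t => t.val < m) := by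
      ext t; simp [Fin.ext_iff]; omega
    rw [hins, Finset.card_insert_of_notMem (by simp), ih hm]

lemma card_filter_ge_fin (N m : ℕ) (h : m ≤ N) :
    ((Finset.univ : Finset (Fin N)).filter fun t => m ≤ t.val).card = N - m := by
  have key := Finset.card_filter_add_card_filter_not
    (s := (Finset.univ : Finset (Fin N))) (p := fun t => t.val < m)
  have h2 : ((Finset.univ : Finset (Fin N)).filter fun t => ¬ t.val < m) =
      ((Finset.univ : Finset (Fin N)).filter fun t => m ≤ t.val) := by
    ext t; simp only [Finset.mem_filter, Finset.mem_univ, true_and, not_lt]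
  rw [card_filter_lt_fin N m h, h2, Finset.card_univ, Fintype.card_fin] at key
  omega

variable {E : Finset (Fin d)} {p : Fin k → Fin d} {q : Fin (k + 1) → Fin d}

lemma disj_E_p (G : Good E p q) (s : Finset (Fin k)) : Disjoint E (s.image p) := by
  rw [Finset.disjoint_left]
  rintro x hx hx'
  obtain ⟨t, _, rfl⟩ := Finset.mem_image.1 hx'
  exact G.hpE t hx

lemma disj_E_q (G : Good E p q) (s : Finset (Fin (k + 1))) : Disjoint E (s.image q) := by
  rw [Finset.disjoint_left]
  rintro x hx hx'
  obtain ⟨t, _, rfl⟩ := Finset.mem_image.1 hx'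
  exact G.hqE t hx

lemma disj_p_q (G : Good E p q) (s : Finset (Fin k)) (s' : Finset (Fin (k + 1))) :
    Disjoint (s.image p) (s'.image q) := by
  rw [Finset.disjoint_left]
  rintro x hx hx'
  obtain ⟨t, _, rfl⟩ := Finset.mem_image.1 hx
  obtain ⟨t', _, ht'⟩ := Finset.mem_image.1 hx'
  exact G.hpq t t' ht'.symm

lemma card_Av (G : Good E p q) (hEc : E.card + k = n) (i : Fin (k + 1)) :
    (Av E p q i.val).card = n := by
  have hik : i.val ≤ k := Nat.lt_succ_iff.1 i.isLt
  rw [Av, Finset.card_union_of_disjoint, Finset.card_union_of_disjoint (disj_E_p G _),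
    Finset.card_image_of_injective _ G.hp, Finset.card_image_of_injective _ G.hq,
    card_filter_ge_fin k i.val hik, card_filter_lt_fin (k + 1) i.val (by omega)]
  · omega
  · exact Finset.disjoint_union_left.2 ⟨disj_E_q G _, disj_p_q G _ _⟩

lemma card_Bv (G : Good E p q) (hEc : E.card + k = n) (i : Fin (k + 1)) :
    (Bv E p q i.val).card = n := by
  have hik : i.val ≤ k := Nat.lt_succ_iff.1 i.isLt
  have hgt : ((Finset.univ : Finset (Fin (k + 1))).filter fun t => i.val < t.val) =
      ((Finset.univ : Finset (Fin (k + 1))).filter fun t => i.val + 1 ≤ t.val) := by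
    ext t
    simp only [Finset.mem_filter, Finset.mem_univ, true_and]
    omega
  rw [Bv, Finset.card_union_of_disjoint, Finset.card_union_of_disjoint (disj_E_p G _),
    Finset.card_image_of_injective _ G.hp, Finset.card_image_of_injective _ G.hq, hgt,
    card_filter_ge_fin (k + 1) (i.val + 1) (by omega), card_filter_lt_fin k i.val hik]
  · omega
  · exact Finset.disjoint_union_left.2 ⟨disj_E_q G _, disj_p_q G _ _⟩

end CardLemmas

/-- The vertex type. -/
abbrev Vt (d n : ℕ) := {S : Finset (Fin d) // S.card = n}

section Matrices

variable {E : Finset (Fin d)} {p : Fin k → Fin d} {q : Fin (k + 1) → Fin d}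

/-- Even vertex as an element of `Vt`. -/
def vA (G : Good E p q) (hEc : E.card + k = n) (i : Fin (k + 1)) : Vt d n :=
  ⟨Av E p q i.val, card_Av G hEc i⟩

/-- Odd vertex as an element of `Vt`. -/
def vB (G : Good E p q) (hEc : E.card + k = n) (i : Fin (k + 1)) : Vt d n :=
  ⟨Bv E p q i.val, card_Bv G hEc i⟩

/-- Symmetric pair matrix. -/
noncomputable def Epair {ι : Type*} [DecidableEq ι] [Fintype ι] (a b : ι) (c : ℝ) : Matrix ι ι ℝ :=
  Matrix.single a b c + Matrix.single b a c

lemma Epair_apply {ι : Type*} [DecidableEq ι] [Fintype ι] (a b : ι) (c : ℝ) (x y : ι) :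
    Epair a b c x y =
      (if a = x ∧ b = y then c else 0) + (if b = x ∧ a = y then c else 0) := by
  simp [Epair, Matrix.single, Matrix.add_apply]

lemma std_transpose {ι : Type*} [DecidableEq ι] [Fintype ι] (a b : ι) (c : ℝ) :
    (Matrix.single a b c).transpose = Matrix.single b a c := by
  ext x y
  simp only [Matrix.transpose_apply, Matrix.single, Matrix.of_apply]
  by_cases h1 : a = y <;> by_cases h2 : b = x <;> simp [h1, h2]

lemma Epair_isSymm {ι : Type*} [DecidableEq ι] [Fintype ι] (a b : ι) (c : ℝ) :
    (Epair a b c).IsSymm := by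
  rw [Matrix.IsSymm, Epair, Matrix.transpose_add, std_transpose, std_transpose, add_comm]

lemma rank_std_le {ι : Type*} [DecidableEq ι] [Fintype ι] (a b : ι) (c : ℝ) :
    (Matrix.single a b c).rank ≤ 1 := by
  classical
  have h : LinearMap.range (Matrix.single a b c).mulVecLin ≤
      Submodule.span ℝ {(Pi.single a c : ι → ℝ)} := by
    rintro x ⟨y, rfl⟩
    have hx : (Matrix.single a b c).mulVecLin y
        = y b • (Pi.single a c : ι → ℝ) := by
      funext i
      simp only [Matrix.mulVecLin_apply, Matrix.mulVec, dotProduct,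
        Matrix.single, Matrix.of_apply, Pi.smul_apply, Pi.single_apply,
        smul_eq_mul, ite_and]
      rw [Finset.sum_eq_single b]
      · by_cases hai : a = i <;> simp [hai, eq_comm, mul_comm]
      · intro t _ ht; simp [ht.symm]
      · simp
    rw [hx]
    exact Submodule.smul_mem _ _ (Submodule.mem_span_singleton_self _)
  refine le_trans (Submodule.finrank_mono h) ?_
  by_cases hc : (Pi.single a c : ι → ℝ) = (0 : ι → ℝ)
  · rw [hc, Submodule.span_zero_singleton]
    simp
  · rw [finrank_span_singleton hc]

lemma rank_add_le' {ι : Type*} [DecidableEq ι] [Fintype ι] (A B : Matrix ι ι ℝ) :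
    (A + B).rank ≤ A.rank + B.rank := by
  have h : LinearMap.range (A + B).mulVecLin ≤
      LinearMap.range A.mulVecLin ⊔ LinearMap.range B.mulVecLin := by
    rintro x ⟨y, rfl⟩
    rw [Matrix.mulVecLin_add]
    exact Submodule.mem_sup.2 ⟨A.mulVecLin y, ⟨y, rfl⟩, B.mulVecLin y, ⟨y, rfl⟩, rfl⟩
  exact le_trans (Submodule.finrank_mono h)
    (Submodule.finrank_add_le_finrank_add_finrank _ _)

lemma rank_Epair_le {ι : Type*} [DecidableEq ι] [Fintype ι] (a b : ι) (c : ℝ) :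
    (Epair a b c).rank ≤ 2 := by
  refine le_trans (rank_add_le' _ _) ?_
  have := rank_std_le a b c
  have := rank_std_le b a c
  omega

/-- The matrix family attached to one edge. -/
noncomputable def edgeM (w : Fin d) (a b : Vt d n) (c : ℝ) : Fin d → Matrix (Vt d n) (Vt d n) ℝ :=
  fun v => if v = w then Epair a b c else 0

/-- The full coefficient matrices. -/
noncomputable def Cmat (G : Good E p q) (hEc : E.card + k = n) (v : Fin d) :
    Matrix (Vt d n) (Vt d n) ℝ :=
  (∑ i : Fin k, edgeM (p i) (vB G hEc i.castSucc) (vA G hEc i.succ) (-(1 / 2)) v) +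
    ∑ i : Fin (k + 1), edgeM (q i) (vA G hEc i) (vB G hEc i) (1 / 2) v

lemma Cmat_isSymm (G : Good E p q) (hEc : E.card + k = n) (v : Fin d) :
    (Cmat G hEc v).IsSymm := by
  refine Matrix.IsSymm.add ?_ ?_ <;>
  · rw [Matrix.IsSymm, Matrix.transpose_sum]
    refine Finset.sum_congr rfl fun i _ => ?_
    unfold edgeM
    split
    · exact Epair_isSymm _ _ _
    · exact Matrix.transpose_zero

lemma Cmat_rank_le (G : Good E p q) (hEc : E.card + k = n) (v : Fin d) :
    (Cmat G hEc v).rank ≤ 2 := by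
  classical
  by_cases hvp : ∃ i, v = p i
  · obtain ⟨i₀, rfl⟩ := hvp
    have h1 : (∑ i : Fin k, edgeM (p i) (vB G hEc i.castSucc) (vA G hEc i.succ)
        (-(1 / 2)) (p i₀)) = Epair (vB G hEc i₀.castSucc) (vA G hEc i₀.succ) (-(1 / 2)) := by
      have hside : ∀ b ∈ (Finset.univ : Finset (Fin k)), b ≠ i₀ →
          edgeM (p b) (vB G hEc b.castSucc) (vA G hEc b.succ) (-(1 / 2)) (p i₀) = 0 := by
        intro b _ hb
        simp only [edgeM]
        exact if_neg fun hpe => hb (G.hp hpe).symm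
      rw [Finset.sum_eq_single_of_mem i₀ (Finset.mem_univ i₀) hside]
      simp [edgeM]
    have h2 : (∑ i : Fin (k + 1), edgeM (q i) (vA G hEc i) (vB G hEc i) (1 / 2) (p i₀)) = 0 := by
      refine Finset.sum_eq_zero fun i _ => ?_
      rw [edgeM, if_neg (G.hpq i₀ i)]
    rw [Cmat, h1, h2, add_zero]
    exact rank_Epair_le _ _ _
  · by_cases hvq : ∃ i, v = q i
    · obtain ⟨i₀, rfl⟩ := hvq
      have h1 : (∑ i : Fin k, edgeM (p i) (vB G hEc i.castSucc) (vA G hEc i.succ)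
          (-(1 / 2)) (q i₀)) = 0 := by
        refine Finset.sum_eq_zero fun i _ => ?_
        rw [edgeM, if_neg fun h => G.hpq i i₀ h.symm]
      have h2 : (∑ i : Fin (k + 1), edgeM (q i) (vA G hEc i) (vB G hEc i) (1 / 2) (q i₀)) =
          Epair (vA G hEc i₀) (vB G hEc i₀) (1 / 2) := by
        have hside : ∀ b ∈ (Finset.univ : Finset (Fin (k + 1))), b ≠ i₀ →
            edgeM (q b) (vA G hEc b) (vB G hEc b) (1 / 2) (q i₀) = 0 := by
          intro b _ hb
          simp only [edgeM]
          exact if_neg fun hpe => hb (G.hq hpe).symm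
        rw [Finset.sum_eq_single_of_mem i₀ (Finset.mem_univ i₀) hside]
        simp [edgeM]
      rw [Cmat, h1, h2, zero_add]
      exact rank_Epair_le _ _ _
    · have h1 : (∑ i : Fin k, edgeM (p i) (vB G hEc i.castSucc) (vA G hEc i.succ)
          (-(1 / 2)) v) = 0 := by
        refine Finset.sum_eq_zero fun i _ => ?_
        rw [edgeM, if_neg fun h => hvp ⟨i, h⟩]
      have h2 : (∑ i : Fin (k + 1), edgeM (q i) (vA G hEc i) (vB G hEc i) (1 / 2) v) = 0 := by
        refine Finset.sum_eq_zero fun i _ => ?_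
        rw [edgeM, if_neg fun h => hvq ⟨i, h⟩]
      rw [Cmat, h1, h2, add_zero, Matrix.rank_zero]
      omega

end Matrices

section RowSums

/-- Monomial of a vertex. -/
noncomputable def u (j : Vt d n) : MvPolynomial (Fin d) ℝ := ∏ t ∈ j.1, X t

/-- The row sum appearing in the statement. -/
noncomputable def rowSum (M : Fin d → Matrix (Vt d n) (Vt d n) ℝ) (r : Vt d n) : MvPolynomial (Fin d) ℝ :=
  ∑ j : Vt d n, (∑ v, MvPolynomial.C (M v r j) * X v) * u j

lemma rowSum_add (M N : Fin d → Matrix (Vt d n) (Vt d n) ℝ) (r : Vt d n) :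
    rowSum (fun v => M v + N v) r = rowSum M r + rowSum N r := by
  unfold rowSum
  simp only [Matrix.add_apply, map_add, add_mul, Finset.sum_add_distrib]

lemma rowSum_zero (r : Vt d n) :
    rowSum (fun _ : Fin d => (0 : Matrix (Vt d n) (Vt d n) ℝ)) r = 0 := by
  unfold rowSum
  simp

lemma rowSum_sum {ι : Type*} (s : Finset ι) (M : ι → Fin d → Matrix (Vt d n) (Vt d n) ℝ)
    (r : Vt d n) :
    rowSum (fun v => ∑ i ∈ s, M i v) r = ∑ i ∈ s, rowSum (M i) r := by
  classical
  induction s using Finset.induction_on with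
  | empty => simpa using rowSum_zero r
  | insert a s' hne ih =>
    rw [Finset.sum_insert hne]
    rw [show (fun v => ∑ i ∈ insert a s', M i v) =
      (fun v => M a v + ∑ i ∈ s', M i v) from funext fun v => Finset.sum_insert hne,
      rowSum_add, ih]

lemma edge_row (w : Fin d) (a b : Vt d n) (c : ℝ) (r : Vt d n) :
    rowSum (edgeM w a b c) r =
      MvPolynomial.C c * X w *
        ((if a = r then u b else 0) + (if b = r then u a else 0)) := by
  unfold rowSum
  have h1 : ∀ j : Vt d n,
      (∑ v, MvPolynomial.C (edgeM w a b c v r j) * X v) =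
        MvPolynomial.C (Epair a b c r j) * X w := by
    intro j
    rw [Finset.sum_eq_single w]
    · simp [edgeM]
    · intro v _ hv; simp [edgeM, hv]
    · simp
  simp only [h1, Epair_apply, map_add, apply_ite (MvPolynomial.C (σ := Fin d) (R := ℝ)),
    map_zero, add_mul, ite_mul, zero_mul, Finset.sum_add_distrib, ite_and]
  by_cases ha : a = r <;> by_cases hb : b = r <;>
    simp [ha, hb, Finset.sum_ite_eq, mul_add, mul_assoc]

end RowSums

section Main

variable {E : Finset (Fin d)} {p : Fin k → Fin d} {q : Fin (k + 1) → Fin d}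

lemma monomial_M1 (G : Good E p q) (hEc : E.card + k = n) (i : Fin k) :
    X (p i) * u (vA G hEc i.succ) = X (q i.castSucc) * u (vA G hEc i.castSucc) := by
  have hstep := Av_step E p q i
  have hq : q i.castSucc ∉ Av E p q i.val := q_not_mem_Av G (le_refl _)
  have hp : p i ∉ Av E p q (i.val + 1) := p_not_mem_Av G (Nat.lt_succ_self _)
  have h1 : ∏ t ∈ insert (q i.castSucc) (Av E p q i.val), (X t : MvPolynomial (Fin d) ℝ) =
      X (q i.castSucc) * ∏ t ∈ Av E p q i.val, X t := Finset.prod_insert hq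
  have h2 : ∏ t ∈ insert (p i) (Av E p q (i.val + 1)), (X t : MvPolynomial (Fin d) ℝ) =
      X (p i) * ∏ t ∈ Av E p q (i.val + 1), X t := Finset.prod_insert hp
  have : X (q i.castSucc) * ∏ t ∈ Av E p q i.val, (X t : MvPolynomial (Fin d) ℝ) =
      X (p i) * ∏ t ∈ Av E p q (i.val + 1), X t := by
    rw [← h1, ← h2, hstep]
  unfold u vA
  simp only [Fin.val_succ, Fin.coe_castSucc]
  exact this.symm

lemma monomial_M2 (G : Good E p q) (hEc : E.card + k = n) (i : Fin k) :
    X (p i) * u (vB G hEc i.castSucc) = X (q i.succ) * u (vB G hEc i.succ) := by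
  have hstep := Bv_step E p q i
  have hp : p i ∉ Bv E p q i.val := p_not_mem_Bv G (le_refl _)
  have hq : q i.succ ∉ Bv E p q (i.val + 1) := q_not_mem_Bv G (le_refl _)
  have h1 : ∏ t ∈ insert (p i) (Bv E p q i.val), (X t : MvPolynomial (Fin d) ℝ) =
      X (p i) * ∏ t ∈ Bv E p q i.val, X t := Finset.prod_insert hp
  have h2 : ∏ t ∈ insert (q i.succ) (Bv E p q (i.val + 1)), (X t : MvPolynomial (Fin d) ℝ) =
      X (q i.succ) * ∏ t ∈ Bv E p q (i.val + 1), X t := Finset.prod_insert hq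
  have : X (p i) * ∏ t ∈ Bv E p q i.val, (X t : MvPolynomial (Fin d) ℝ) =
      X (q i.succ) * ∏ t ∈ Bv E p q (i.val + 1), X t := by
    rw [← h1, ← h2, hstep]
  unfold u vB
  simp only [Fin.val_succ, Fin.coe_castSucc]
  exact this

lemma monomial_M3 (G : Good E p q) (hEc : E.card + k = n) :
    X (q 0) * u (vB G hEc 0) =
      ∏ t ∈ E ∪ Finset.univ.image q, (X t : MvPolynomial (Fin d) ℝ) := by
  have hq : q 0 ∉ Bv E p q 0 := q_not_mem_Bv G (le_refl _)
  have hval : (vB G hEc 0).1 = Bv E p q 0 := rfl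
  rw [u, hval, ← Finset.prod_insert hq, Bv_zero_insert E p q]

lemma monomial_M4 (G : Good E p q) (hEc : E.card + k = n) :
    X (q (Fin.last k)) * u (vA G hEc (Fin.last k)) =
      ∏ t ∈ E ∪ Finset.univ.image q, (X t : MvPolynomial (Fin d) ℝ) := by
  have hq : q (Fin.last k) ∉ Av E p q k := q_not_mem_Av G (le_refl _)
  have hval : (vA G hEc (Fin.last k)).1 = Av E p q k := rfl
  rw [u, hval, ← Finset.prod_insert hq, Av_last_insert E p q]

lemma vB_last (G : Good E p q) (hEc : E.card + k = n) :
    vB G hEc (Fin.last k) = vA G hEc 0 :=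
  Subtype.ext (Bv_last_eq_Av_zero E p q)

theorem aux (G : Good E p q) (hEc : E.card + k = n) (e : Vt d n)
    (he : e.1 = E ∪ Finset.univ.image p) :
    ∃ C : Fin d → Matrix (Vt d n) (Vt d n) ℝ,
      (∀ v, (C v).IsSymm ∧ (C v).rank ≤ 2) ∧
      ∀ r : Vt d n,
        (∑ j : Vt d n, (∑ v, MvPolynomial.C (C v r j) * X v) * ∏ t ∈ j.1, X t) =
          (if r = e then ∏ t ∈ E ∪ Finset.univ.image q, (X t : MvPolynomial (Fin d) ℝ)
            else 0) := by
  classical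
  refine ⟨Cmat G hEc, fun v => ⟨Cmat_isSymm G hEc v, Cmat_rank_le G hEc v⟩, fun r => ?_⟩
  have he' : e = vA G hEc 0 := by
    refine Subtype.ext ?_
    rw [he, vA]
    exact (Av_zero_eq E p q).symm
  set PT := ∏ t ∈ E ∪ Finset.univ.image q, (X t : MvPolynomial (Fin d) ℝ) with hPT
  -- abbreviations
  set g : Fin (k + 1) → MvPolynomial (Fin d) ℝ :=
    fun i => if vA G hEc i = r then X (q i) * u (vB G hEc i) else 0 with hg
  set h : Fin (k + 1) → MvPolynomial (Fin d) ℝ :=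
    fun i => if vB G hEc i = r then X (q i) * u (vA G hEc i) else 0 with hh
  have halve : MvPolynomial.C ((1 : ℝ) / 2) * (PT + PT) = PT := by
    rw [← two_mul, ← mul_assoc]
    have h2 : (MvPolynomial.C ((1 : ℝ) / 2) * 2 : MvPolynomial (Fin d) ℝ) = 1 := by
      have h3 : (2 : MvPolynomial (Fin d) ℝ) = MvPolynomial.C (2 : ℝ) :=
        (map_ofNat MvPolynomial.C 2).symm
      rw [h3, ← map_mul]
      norm_num
    rw [h2, one_mul]
  have main : rowSum (Cmat G hEc) r =
      MvPolynomial.C ((1 : ℝ) / 2) * (g 0 + h (Fin.last k)) := by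
    have hC : rowSum (Cmat G hEc) r =
        (∑ i : Fin k, rowSum (edgeM (p i) (vB G hEc i.castSucc) (vA G hEc i.succ)
          (-(1 / 2))) r) +
        ∑ i : Fin (k + 1), rowSum (edgeM (q i) (vA G hEc i) (vB G hEc i) (1 / 2)) r := by
      rw [show Cmat G hEc = fun v =>
        (∑ i : Fin k, edgeM (p i) (vB G hEc i.castSucc) (vA G hEc i.succ) (-(1 / 2)) v) +
        ∑ i : Fin (k + 1), edgeM (q i) (vA G hEc i) (vB G hEc i) (1 / 2) v from rfl,
        rowSum_add, rowSum_sum, rowSum_sum]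
    rw [hC]
    have hpterm : ∀ i : Fin k,
        rowSum (edgeM (p i) (vB G hEc i.castSucc) (vA G hEc i.succ) (-(1 / 2))) r =
          -(MvPolynomial.C ((1 : ℝ) / 2)) * (h i.castSucc + g i.succ) := by
      intro i
      rw [edge_row]
      simp only [hg, hh, mul_add, mul_ite, mul_zero]
      congr 1
      · by_cases hc : vB G hEc i.castSucc = r
        · rw [if_pos hc, if_pos hc, mul_assoc, monomial_M1 G hEc i, map_neg]
        · rw [if_neg hc, if_neg hc]
      · by_cases hc : vA G hEc i.succ = r
        · rw [if_pos hc, if_pos hc, mul_assoc, monomial_M2 G hEc i, map_neg]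
        · rw [if_neg hc, if_neg hc]
    have hqterm : ∀ i : Fin (k + 1),
        rowSum (edgeM (q i) (vA G hEc i) (vB G hEc i) (1 / 2)) r =
          MvPolynomial.C ((1 : ℝ) / 2) * (g i + h i) := by
      intro i
      rw [edge_row]
      simp only [hg, hh, mul_add, mul_ite, mul_zero, mul_assoc]
    simp only [hpterm, hqterm]
    rw [← Finset.mul_sum, ← Finset.mul_sum, Finset.sum_add_distrib,
      Finset.sum_add_distrib, Fin.sum_univ_succ g, Fin.sum_univ_castSucc h]
    ring
  rw [show (∑ j : Vt d n, (∑ v, MvPolynomial.C (Cmat G hEc v r j) * X v) * ∏ t ∈ j.1, X t)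
      = rowSum (Cmat G hEc) r from rfl, main]
  have hg0 : g 0 = if vA G hEc 0 = r then PT else 0 := by
    simp only [hg]
    by_cases hc : vA G hEc 0 = r
    · rw [if_pos hc, if_pos hc, monomial_M3 G hEc]
    · rw [if_neg hc, if_neg hc]
  have hhl : h (Fin.last k) = if vA G hEc 0 = r then PT else 0 := by
    simp only [hh]; rw [vB_last G hEc]
    by_cases hc : vA G hEc 0 = r
    · rw [if_pos hc, if_pos hc, monomial_M4 G hEc]
    · rw [if_neg hc, if_neg hc]
  rw [hg0, hhl, he']
  by_cases hc : vA G hEc 0 = r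
  · rw [if_pos hc, if_pos hc.symm, halve]
  · rw [if_neg hc, if_neg fun hrr => hc hrr.symm]
    simp

end Main

end MultiAffineAux

theorem multiaffine_monomial_pencil_representation
    {d n : ℕ} (hn1 : 1 ≤ n) (hnd : n ≤ d - 1)
    (T : Finset (Fin d)) (hT : T.card = n + 1)
    (e : {S : Finset (Fin d) // S.card = n}) :
    ∃ C : Fin d → Matrix {S : Finset (Fin d) // S.card = n}
                        {S : Finset (Fin d) // S.card = n} ℝ,
      (∀ k, (C k).IsSymm ∧ (C k).rank ≤ 2) ∧
      ∀ i : {S : Finset (Fin d) // S.card = n},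
        (∑ j : {S : Finset (Fin d) // S.card = n},
          (∑ k, MvPolynomial.C (C k i j) * X k) * ∏ t ∈ j.1, X t) =
        (if i = e then ∏ t ∈ T, (X t : MvPolynomial (Fin d) ℝ) else 0) := by
  classical
  obtain ⟨k, hk⟩ : ∃ k, (e.1 \ T).card = k := ⟨_, rfl⟩
  have he1 : e.1.card = n := e.2
  have hcomp : (e.1 \ T).card + (e.1 ∩ T).card = e.1.card :=
    Finset.card_sdiff_add_card_inter e.1 T
  have hcomp2 : (T \ e.1).card + (T ∩ e.1).card = T.card :=
    Finset.card_sdiff_add_card_inter T e.1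
  have hinter : (e.1 ∩ T).card = (T ∩ e.1).card := by rw [Finset.inter_comm]
  have hQcard : (T \ e.1).card = k + 1 := by omega
  set p : Fin k → Fin d := fun i => (e.1 \ T).orderEmbOfFin hk i with hp
  set q : Fin (k + 1) → Fin d := fun j => (T \ e.1).orderEmbOfFin hQcard j with hq
  have hpmem : ∀ i, p i ∈ e.1 \ T := fun i => Finset.orderEmbOfFin_mem _ hk i
  have hqmem : ∀ j, q j ∈ T \ e.1 := fun j => Finset.orderEmbOfFin_mem _ hQcard j
  have G : MultiAffineAux.Good (e.1 ∩ T) p q := by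
    refine ⟨?_, ?_, ?_, ?_, ?_⟩
    · exact fun a b hab => ((e.1 \ T).orderEmbOfFin hk).injective hab
    · exact fun a b hab => ((T \ e.1).orderEmbOfFin hQcard).injective hab
    · intro i j hpq
      have h1 := hpmem i
      have h2 := hqmem j
      rw [hpq] at h1
      rw [Finset.mem_sdiff] at h1 h2
      exact h1.2 h2.1
    · intro i
      have h1 := hpmem i
      rw [Finset.mem_sdiff] at h1
      rw [Finset.mem_inter]
      exact fun hx => h1.2 hx.2
    · intro j
      have h2 := hqmem j
      rw [Finset.mem_sdiff] at h2
      rw [Finset.mem_inter]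
      exact fun hx => h2.2 hx.1
  have hEc : (e.1 ∩ T).card + k = n := by omega
  have himp : Finset.univ.image p = e.1 \ T := by
    ext x
    simp only [Finset.mem_image, Finset.mem_univ, true_and]
    constructor
    · rintro ⟨i, rfl⟩; exact hpmem i
    · intro hx
      have hx' : x ∈ Set.range ((e.1 \ T).orderEmbOfFin hk) := by
        rw [Finset.range_orderEmbOfFin]
        exact hx
      obtain ⟨i, hi⟩ := hx'
      exact ⟨i, hi⟩
  have himq : Finset.univ.image q = T \ e.1 := by
    ext x
    simp only [Finset.mem_image, Finset.mem_univ, true_and]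
    constructor
    · rintro ⟨j, rfl⟩; exact hqmem j
    · intro hx
      have hx' : x ∈ Set.range ((T \ e.1).orderEmbOfFin hQcard) := by
        rw [Finset.range_orderEmbOfFin]
        exact hx
      obtain ⟨j, hj⟩ := hx'
      exact ⟨j, hj⟩
  have he : e.1 = (e.1 ∩ T) ∪ Finset.univ.image p := by
    rw [himp, Finset.union_comm]
    exact (Finset.sdiff_union_inter e.1 T).symm
  have hTeq : (e.1 ∩ T) ∪ Finset.univ.image q = T := by
    rw [himq, Finset.inter_comm, Finset.union_comm]
    exact Finset.sdiff_union_inter T e.1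
  obtain ⟨C, hC1, hC2⟩ := MultiAffineAux.aux G hEc e he
  refine ⟨C, hC1, fun i => ?_⟩
  rw [hC2 i, hTeq]
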